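/- Stochastic subgradient method with SPS for nonsmooth convex functions under interpolation: if f_i are convex with uniformly bounded subgradients ‖g_i(x)‖ ≤ G, interpolation holds (f_i(x*) = f_i* = f(x*) for all i, where x* minimizes f), and γ_k = (f_i(x^k) − f_i(x*))/‖g_i^k‖², then E[f(x̄^K) − f(x*)] ≤ G‖x^0 − x*‖/√K, where x̄^K = (1/K)Σ_{k<K} x^k. -/

import Mathlib

open scoped RealInnerProductSpace

section aux
variable {d : ℕ}

/-- one SPS step decreases distance squared -/
lemma sps_step {G : ℝ} (hG : 0 < G) (φ : EuclideanSpace ℝ (Fin d) → ℝ)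
    (g x xs : EuclideanSpace ℝ (Fin d))
    (hconv : φ xs ≥ φ x + ⟪g, xs - x⟫)
    (hlow : φ xs ≤ φ x) (hgb : ‖g‖ ≤ G) :
    (φ x - φ xs) ^ 2 / G ^ 2
      ≤ ‖x - xs‖ ^ 2 - ‖x - ((φ x - φ xs) / ‖g‖ ^ 2) • g - xs‖ ^ 2 := by
  set Δ := φ x - φ xs with hΔdef
  have hΔ0 : 0 ≤ Δ := by simp only [hΔdef]; linarith
  have hip : Δ ≤ ⟪g, x - xs⟫ := by
    have h1 : ⟪g, xs - x⟫ = -⟪g, x - xs⟫ := by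
      rw [← inner_neg_right]; congr 1; abel
    rw [h1] at hconv; linarith
  by_cases hg : g = 0
  · have hΔz : Δ = 0 := le_antisymm (by simpa [hg] using hip) hΔ0
    simp [hg, hΔz]
  · have hgpos : 0 < ‖g‖ := norm_pos_iff.mpr hg
    set s := ‖g‖ ^ 2 with hs
    have hspos : 0 < s := by positivity
    set γ := Δ / s with hγ
    have hγ0 : 0 ≤ γ := div_nonneg hΔ0 hspos.le
    have hexp : ‖x - γ • g - xs‖ ^ 2
        = ‖x - xs‖ ^ 2 - 2 * γ * ⟪g, x - xs⟫ + γ ^ 2 * s := by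
      have h2 : x - γ • g - xs = (x - xs) - γ • g := by abel
      rw [h2, norm_sub_sq_real, real_inner_smul_right, norm_smul]
      rw [real_inner_comm]
      simp [hs, mul_pow]
      ring
    rw [hexp]
    have hγs : γ * s = Δ := div_mul_cancel₀ _ hspos.ne'
    have key : Δ ^ 2 / s ≤ 2 * γ * ⟪g, x - xs⟫ - γ ^ 2 * s := by
      have h3 : γ * Δ ≤ γ * ⟪g, x - xs⟫ := mul_le_mul_of_nonneg_left hip hγ0
      have h4 : Δ ^ 2 / s = γ * Δ := by
        rw [hγ]; field_simp
      nlinarith [hγs]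
    have h5 : Δ ^ 2 / G ^ 2 ≤ Δ ^ 2 / s := by
      apply div_le_div_of_nonneg_left (sq_nonneg _) hspos
      calc s = ‖g‖ ^ 2 := hs
        _ ≤ G ^ 2 := by nlinarith [hgpos]
    linarith

lemma marg {n K : ℕ} (A : (Fin K → Fin n) → Fin n → ℝ) (p : Fin K)
    (hA : ∀ ω i, A (Function.update ω p i) = A ω) :
    ∑ ω : Fin K → Fin n, ∑ i : Fin n, A ω i
      = (n : ℝ) * ∑ ω : Fin K → Fin n, A ω (ω p) := by
  calc ∑ ω : Fin K → Fin n, ∑ i : Fin n, A ω i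
      = ∑ q : (Fin K → Fin n) × Fin n, A q.1 q.2 := (Fintype.sum_prod_type (fun q => A q.1 q.2)).symm
    _ = ∑ q : (Fin K → Fin n) × Fin n, A q.1 (q.1 p) := by
        refine Fintype.sum_equiv
          ⟨fun q => (Function.update q.1 p q.2, q.1 p),
           fun q => (Function.update q.1 p q.2, q.1 p), ?_, ?_⟩ _ _ ?_
        · rintro ⟨ω, i⟩; simp [Function.update_idem]
        · rintro ⟨ω, i⟩; simp [Function.update_idem]
        · rintro ⟨ω, i⟩; simp [hA]
    _ = (n : ℝ) * ∑ ω : Fin K → Fin n, A ω (ω p) := by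
        rw [Fintype.sum_prod_type]
        simp [Finset.sum_const, Finset.mul_sum, nsmul_eq_mul]

variable {n : ℕ} (hn : 0 < n)
  (f : Fin n → EuclideanSpace ℝ (Fin d) → ℝ)
  (gsub : Fin n → EuclideanSpace ℝ (Fin d) → EuclideanSpace ℝ (Fin d))
  (F : EuclideanSpace ℝ (Fin d) → ℝ)

lemma F_subgrad (hsub : ∀ i x y, f i y ≥ f i x + ⟪gsub i x, y - x⟫)
    (hF : ∀ x, F x = (1 / (n : ℝ)) * ∑ i, f i x)
    (x y : EuclideanSpace ℝ (Fin d)) :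
    F x + ⟪(n : ℝ)⁻¹ • ∑ i, gsub i x, y - x⟫ ≤ F y := by
  rw [hF x, hF y, real_inner_smul_left, sum_inner]
  have h : ∑ i, f i x + ∑ i, (⟪gsub i x, y - x⟫ : ℝ) ≤ ∑ i, f i y := by
    rw [← Finset.sum_add_distrib]
    exact Finset.sum_le_sum fun i _ => hsub i x y
  have hn0 : (0 : ℝ) ≤ (n : ℝ)⁻¹ := by positivity
  have := mul_le_mul_of_nonneg_left h hn0
  rw [one_div]
  linarith [this, mul_add ((n:ℝ)⁻¹) (∑ i, f i x) (∑ i, (⟪gsub i x, y - x⟫ : ℝ))]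

lemma jensenF (hsub : ∀ i x y, f i y ≥ f i x + ⟪gsub i x, y - x⟫)
    (hF : ∀ x, F x = (1 / (n : ℝ)) * ∑ i, f i x)
    (K : ℕ) (hK : 0 < K) (z : Fin K → EuclideanSpace ℝ (Fin d)) :
    F ((K : ℝ)⁻¹ • ∑ k, z k) ≤ (K : ℝ)⁻¹ * ∑ k, F (z k) := by
  set xb := (K : ℝ)⁻¹ • ∑ k, z k with hxb
  set gF := (n : ℝ)⁻¹ • ∑ i, gsub i xb with hgF
  have hKne : ((K : ℝ)) ≠ 0 := Nat.cast_ne_zero.mpr hK.ne'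
  have h2 : ∑ k, (F xb + ⟪gF, z k - xb⟫) ≤ ∑ k, F (z k) :=
    Finset.sum_le_sum fun k _ => F_subgrad f gsub F hsub hF xb (z k)
  have h3 : ∑ k : Fin K, (z k - xb) = 0 := by
    rw [Finset.sum_sub_distrib, Finset.sum_const, Finset.card_univ, Fintype.card_fin]
    rw [hxb, ← Nat.cast_smul_eq_nsmul ℝ, smul_smul, mul_inv_cancel₀ hKne, one_smul]
    simp
  have h4 : ∑ k : Fin K, (⟪gF, z k - xb⟫ : ℝ) = 0 := by
    rw [← inner_sum, h3, inner_zero_right]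
  rw [Finset.sum_add_distrib, h4, Finset.sum_const, Finset.card_univ, Fintype.card_fin,
    nsmul_eq_mul, add_zero] at h2
  rw [inv_mul_eq_div, le_div_iff₀ (by exact_mod_cast hK)]
  linarith [h2]

end aux

/-- The iterate `x^k` determined by the first `k` coordinates of `ω`. -/
def iterX {d n K : ℕ} (Y : (k : ℕ) → (Fin k → Fin n) → EuclideanSpace ℝ (Fin d))
    (ω : Fin K → Fin n) (k : Fin (K + 1)) : EuclideanSpace ℝ (Fin d) :=
  Y k.val (fun j => ω (Fin.castLE k.is_le j))

/-- Stochastic subgradient method with SPS for nonsmooth convex functions under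
interpolation: with bounded subgradients `‖g_i(x)‖ ≤ G` and
`γ_k = (f_i(x^k) − f_i(x*))/‖g_i^k‖²`, one has
`E[f(x̄^K) − f(x*)] ≤ G‖x^0 − x*‖/√K`. -/
theorem stmt17 {d n : ℕ} (hn : 0 < n)
    (f : Fin n → EuclideanSpace ℝ (Fin d) → ℝ)
    (gsub : Fin n → EuclideanSpace ℝ (Fin d) → EuclideanSpace ℝ (Fin d))
    (hsub : ∀ i x y, f i y ≥ f i x + ⟪gsub i x, y - x⟫)
    (G : ℝ) (hG : 0 < G) (hbound : ∀ i x, ‖gsub i x‖ ≤ G)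
    (F : EuclideanSpace ℝ (Fin d) → ℝ) (hF : ∀ x, F x = (1 / (n : ℝ)) * ∑ i, f i x)
    (xstar : EuclideanSpace ℝ (Fin d)) (hxstar : ∀ y, F xstar ≤ F y)
    (fstar : Fin n → ℝ) (hfstar : ∀ i, IsGLB (Set.range (f i)) (fstar i))
    (hinterp : ∀ i, f i xstar = fstar i ∧ fstar i = F xstar)
    (hne : ∀ (i : Fin n) (x : EuclideanSpace ℝ (Fin d)),
      F x ≠ F xstar → gsub i x ≠ 0)
    (x0 : EuclideanSpace ℝ (Fin d))
    (Y : (k : ℕ) → (Fin k → Fin n) → EuclideanSpace ℝ (Fin d))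
    (hY0 : ∀ ω, Y 0 ω = x0)
    (hYstep : ∀ (k : ℕ) (ω : Fin (k + 1) → Fin n),
      Y (k + 1) ω =
        Y k (fun j => ω j.castSucc) -
          ((f (ω (Fin.last k)) (Y k (fun j => ω j.castSucc)) -
              f (ω (Fin.last k)) xstar) /
            ‖gsub (ω (Fin.last k)) (Y k (fun j => ω j.castSucc))‖ ^ 2) •
            gsub (ω (Fin.last k)) (Y k (fun j => ω j.castSucc))) :
    ∀ K : ℕ, 0 < K →
      (1 / (n : ℝ) ^ K) * ∑ ω : Fin K → Fin n,
          (F ((K : ℝ)⁻¹ • ∑ k : Fin K, Y k.val fun j => ω (Fin.castLE k.isLt.le j)) -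
            F xstar) ≤
        G * ‖x0 - xstar‖ / Real.sqrt K := by
  intro K hK
  have hKR : (0 : ℝ) < K := by exact_mod_cast hK
  have hKne : ((K : ℝ)) ≠ 0 := hKR.ne'
  have hnR : (0 : ℝ) < n := by exact_mod_cast hn
  set X : (Fin K → Fin n) → Fin (K + 1) → EuclideanSpace ℝ (Fin d) := iterX Y with hXdef
  set D : (Fin K → Fin n) → Fin K → ℝ :=
    fun ω k => f (ω k) (X ω k.castSucc) - f (ω k) xstar with hDdef
  -- the step relation
  have hstep : ∀ (ω : Fin K → Fin n) (k : Fin K),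
      X ω k.succ = X ω k.castSucc -
        ((f (ω k) (X ω k.castSucc) - f (ω k) xstar) /
            ‖gsub (ω k) (X ω k.castSucc)‖ ^ 2) • gsub (ω k) (X ω k.castSucc) := by
    intro ω k
    exact hYstep k.val (fun j => ω (Fin.castLE k.isLt j))
  have hX0 : ∀ ω (h : (0:ℕ) < K + 1), X ω ⟨0, h⟩ = x0 := fun ω h => hY0 _
  -- lower bound at xstar
  have hlow : ∀ (i : Fin n) x, f i xstar ≤ f i x := by
    intro i x
    have h1 : fstar i ≤ f i x := (hfstar i).1 ⟨x, rfl⟩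
    have h2 := (hinterp i).1
    linarith
  have hDpos : ∀ ω k, 0 ≤ D ω k := by
    intro ω k
    have := hlow (ω k) (X ω k.castSucc)
    simp only [hDdef]; linarith
  -- one-step inequality
  have hstep2 : ∀ (ω : Fin K → Fin n) (k : Fin K),
      D ω k ^ 2 / G ^ 2 ≤ ‖X ω k.castSucc - xstar‖ ^ 2 - ‖X ω k.succ - xstar‖ ^ 2 := by
    intro ω k
    have h := sps_step hG (f (ω k)) (gsub (ω k) (X ω k.castSucc)) (X ω k.castSucc) xstar
      (hsub (ω k) (X ω k.castSucc) xstar) (hlow (ω k) (X ω k.castSucc))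
      (hbound (ω k) (X ω k.castSucc))
    rw [hstep ω k]
    exact h
  -- telescoping
  have tele : ∀ ω, ∑ k : Fin K, D ω k ^ 2 / G ^ 2 ≤ ‖x0 - xstar‖ ^ 2 := by
    intro ω
    set ψ : ℕ → ℝ := fun m => if h : m < K + 1 then ‖X ω ⟨m, h⟩ - xstar‖ ^ 2 else 0 with hψ
    have h1 : ∀ k : Fin K, D ω k ^ 2 / G ^ 2 ≤ ψ k.val - ψ (k.val + 1) := by
      intro k
      have e1 : ψ k.val = ‖X ω k.castSucc - xstar‖ ^ 2 := by
        simp only [hψ]; rw [dif_pos (by omega : k.val < K + 1)]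
        exact congrArg (fun t => ‖X ω t - xstar‖ ^ 2) (Fin.ext (by simp))
      have e2 : ψ (k.val + 1) = ‖X ω k.succ - xstar‖ ^ 2 := by
        simp only [hψ]; rw [dif_pos (by omega : k.val + 1 < K + 1)]
        exact congrArg (fun t => ‖X ω t - xstar‖ ^ 2) (Fin.ext (by simp))
      rw [e1, e2]; exact hstep2 ω k
    have hψK : 0 ≤ ψ K := by
      simp only [hψ]; rw [dif_pos (by omega : K < K + 1)]; positivity
    have hψ0 : ψ 0 = ‖x0 - xstar‖ ^ 2 := by
      simp only [hψ]; rw [dif_pos (by omega : (0:ℕ) < K + 1), hX0 ω]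
    calc ∑ k : Fin K, D ω k ^ 2 / G ^ 2
        ≤ ∑ k : Fin K, (ψ k.val - ψ (k.val + 1)) := Finset.sum_le_sum fun k _ => h1 k
      _ = ∑ j ∈ Finset.range K, (ψ j - ψ (j + 1)) :=
          Fin.sum_univ_eq_sum_range (fun m => ψ m - ψ (m + 1)) K
      _ = ψ 0 - ψ K := Finset.sum_range_sub' ψ K
      _ ≤ ψ 0 := by linarith
      _ = ‖x0 - xstar‖ ^ 2 := hψ0
  -- per-trajectory sum bound
  have hsumD : ∀ ω, ∑ k : Fin K, D ω k ≤ Real.sqrt K * (G * ‖x0 - xstar‖) := by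
    intro ω
    have h1 : (∑ k : Fin K, D ω k) ^ 2 ≤ (K : ℝ) * ∑ k : Fin K, D ω k ^ 2 := by
      have := sq_sum_le_card_mul_sum_sq (s := (Finset.univ : Finset (Fin K))) (f := D ω)
      simpa using this
    have h2 : ∑ k : Fin K, D ω k ^ 2 ≤ G ^ 2 * ‖x0 - xstar‖ ^ 2 := by
      have h := tele ω
      rw [← Finset.sum_div, div_le_iff₀ (by positivity : (0:ℝ) < G ^ 2)] at h
      linarith
    have h3 : (∑ k : Fin K, D ω k) ^ 2 ≤ (Real.sqrt K * (G * ‖x0 - xstar‖)) ^ 2 := by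
      rw [mul_pow, mul_pow, Real.sq_sqrt hKR.le]
      nlinarith
    have h4 : (0:ℝ) ≤ Real.sqrt K * (G * ‖x0 - xstar‖) := by positivity
    have h5 : (0:ℝ) ≤ ∑ k : Fin K, D ω k := Finset.sum_nonneg fun k _ => hDpos ω k
    calc ∑ k : Fin K, D ω k = Real.sqrt ((∑ k : Fin K, D ω k) ^ 2) :=
          (Real.sqrt_sq h5).symm
      _ ≤ Real.sqrt ((Real.sqrt K * (G * ‖x0 - xstar‖)) ^ 2) := Real.sqrt_le_sqrt h3
      _ = Real.sqrt K * (G * ‖x0 - xstar‖) := Real.sqrt_sq h4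
  -- marginalization at step k
  have hmarg : ∀ k : Fin K,
      ∑ ω : Fin K → Fin n, (F (X ω k.castSucc) - F xstar)
        = ∑ ω : Fin K → Fin n, D ω k := by
    intro k
    have hFx : ∀ x, F x - F xstar = (n : ℝ)⁻¹ * ∑ i, (f i x - f i xstar) := by
      intro x
      rw [hF x, hF xstar, Finset.sum_sub_distrib, one_div]; ring
    have hXind : ∀ (ω : Fin K → Fin n) (i' : Fin n),
        X (Function.update ω k i') k.castSucc = X ω k.castSucc := by
      intro ω i'
      simp only [hXdef, iterX]
      refine congrArg _ (funext fun j => ?_)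
      apply Function.update_of_ne
      have hj : (j : ℕ) < (k : ℕ) := by simpa using j.isLt
      intro hc
      have := congrArg Fin.val hc
      simp at this
      omega
    calc ∑ ω : Fin K → Fin n, (F (X ω k.castSucc) - F xstar)
        = ∑ ω : Fin K → Fin n, (n : ℝ)⁻¹ * ∑ i, (f i (X ω k.castSucc) - f i xstar) :=
          Finset.sum_congr rfl fun ω _ => hFx _
      _ = (n : ℝ)⁻¹ * ∑ ω : Fin K → Fin n, ∑ i, (f i (X ω k.castSucc) - f i xstar) := by
          rw [Finset.mul_sum]
      _ = (n : ℝ)⁻¹ * ((n : ℝ) *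
            ∑ ω : Fin K → Fin n, (f (ω k) (X ω k.castSucc) - f (ω k) xstar)) := by
          rw [marg (fun ω i => f i (X ω k.castSucc) - f i xstar) k
            (fun ω i' => funext fun i => by
              show f i (X (Function.update ω k i') k.castSucc) - f i xstar = _
              rw [hXind ω i'])]
      _ = ∑ ω : Fin K → Fin n, D ω k := by
          rw [← mul_assoc, inv_mul_cancel₀ hnR.ne', one_mul]
  -- Jensen per trajectory
  have hjen : ∀ ω : Fin K → Fin n,
      F ((K : ℝ)⁻¹ • ∑ k : Fin K, Y k.val fun j => ω (Fin.castLE k.isLt.le j)) - F xstar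
        ≤ (K : ℝ)⁻¹ * ∑ k : Fin K, (F (X ω k.castSucc) - F xstar) := by
    intro ω
    have hj : F ((K : ℝ)⁻¹ • ∑ k : Fin K, X ω k.castSucc)
        ≤ (K : ℝ)⁻¹ * ∑ k : Fin K, F (X ω k.castSucc) :=
      jensenF f gsub F hsub hF K hK (fun k => X ω k.castSucc)
    have he : (∑ k : Fin K, Y k.val fun j => ω (Fin.castLE k.isLt.le j))
        = ∑ k : Fin K, X ω k.castSucc := rfl
    rw [he]
    have hsplit : (K : ℝ)⁻¹ * ∑ k : Fin K, (F (X ω k.castSucc) - F xstar)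
        = (K : ℝ)⁻¹ * (∑ k : Fin K, F (X ω k.castSucc)) - F xstar := by
      rw [Finset.sum_sub_distrib, mul_sub, Finset.sum_const, Finset.card_univ,
        Fintype.card_fin, nsmul_eq_mul, ← mul_assoc, inv_mul_cancel₀ hKne, one_mul]
    rw [hsplit]
    linarith
  -- put everything together
  have hbig : ∑ ω : Fin K → Fin n,
      (F ((K : ℝ)⁻¹ • ∑ k : Fin K, Y k.val fun j => ω (Fin.castLE k.isLt.le j)) - F xstar)
      ≤ (n : ℝ) ^ K * ((K : ℝ)⁻¹ * (Real.sqrt K * (G * ‖x0 - xstar‖))) := by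
    calc ∑ ω : Fin K → Fin n,
        (F ((K : ℝ)⁻¹ • ∑ k : Fin K, Y k.val fun j => ω (Fin.castLE k.isLt.le j)) - F xstar)
        ≤ ∑ ω : Fin K → Fin n, (K : ℝ)⁻¹ * ∑ k : Fin K, (F (X ω k.castSucc) - F xstar) :=
          Finset.sum_le_sum fun ω _ => hjen ω
      _ = (K : ℝ)⁻¹ * ∑ k : Fin K, ∑ ω : Fin K → Fin n, (F (X ω k.castSucc) - F xstar) := by
          rw [← Finset.mul_sum, Finset.sum_comm]
      _ = (K : ℝ)⁻¹ * ∑ k : Fin K, ∑ ω : Fin K → Fin n, D ω k := by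
          rw [Finset.sum_congr rfl fun k _ => hmarg k]
      _ = (K : ℝ)⁻¹ * ∑ ω : Fin K → Fin n, ∑ k : Fin K, D ω k := by rw [Finset.sum_comm]
      _ ≤ (K : ℝ)⁻¹ * ∑ ω : Fin K → Fin n, Real.sqrt K * (G * ‖x0 - xstar‖) := by
          apply mul_le_mul_of_nonneg_left _ (by positivity)
          exact Finset.sum_le_sum fun ω _ => hsumD ω
      _ = (n : ℝ) ^ K * ((K : ℝ)⁻¹ * (Real.sqrt K * (G * ‖x0 - xstar‖))) := by
          rw [Finset.sum_const, Finset.card_univ, Fintype.card_fun, Fintype.card_fin,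
            Fintype.card_fin, nsmul_eq_mul]
          push_cast
          ring
  have hnK : (0 : ℝ) < (n : ℝ) ^ K := by positivity
  have hspos : 0 < Real.sqrt K := Real.sqrt_pos.mpr hKR
  have hss : Real.sqrt K * Real.sqrt K = (K : ℝ) := Real.mul_self_sqrt hKR.le
  calc (1 / (n : ℝ) ^ K) * ∑ ω : Fin K → Fin n,
        (F ((K : ℝ)⁻¹ • ∑ k : Fin K, Y k.val fun j => ω (Fin.castLE k.isLt.le j)) - F xstar)
      ≤ (1 / (n : ℝ) ^ K) * ((n : ℝ) ^ K * ((K : ℝ)⁻¹ * (Real.sqrt K * (G * ‖x0 - xstar‖)))) :=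
        mul_le_mul_of_nonneg_left hbig (by positivity)
    _ = G * ‖x0 - xstar‖ / Real.sqrt K := by
        rw [one_div, ← mul_assoc, inv_mul_cancel₀ hnK.ne', one_mul]
        rw [eq_div_iff hspos.ne']
        have h : (K:ℝ)⁻¹ * (Real.sqrt K * (G * ‖x0 - xstar‖)) * Real.sqrt K
            = ((Real.sqrt K * Real.sqrt K) * (K:ℝ)⁻¹) * (G * ‖x0 - xstar‖) := by ring
        rw [h, hss, mul_inv_cancel₀ hKne, one_mul]
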